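/- Let (T, ≤) be a countable well-founded tree and let (μ_i) be a bounded, disjointly supported sequence of positive measures on T. Assume there is a summable function ν : T → [0,∞) such that ν(t) = lim_i μ_i(succ(t)) for every t ∈ T. Then there exist an infinite set L ⊆ ℕ and, for each i ∈ L, a partition of supp μ_i into two disjoint sets A_i and B_i such that, writing μ_i¹ for the measure given by μ_i¹(C) = μ_i(C ∩ A_i) and μ_i² for the measure given by μ_i²(C) = μ_i(C ∩ B_i): (i) for every t ∈ T, lim_{i∈L} μ_i¹(V_t) = ν(V_t) and lim_{i∈L} μ_i¹(succ(t)) = ν(t); and (ii) for every t ∈ T, μ_i²(succ(t)) = 0 for all but finitely many i ∈ L. -/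

import Mathlib

open Filter Topology

/-- The measure of a set `A ⊆ α` under a (summable, positive) density `μ : α → ℝ`. -/
noncomputable def msetT {α : Type*} (μ : α → ℝ) (A : Set α) : ℝ :=
  ∑' t, A.indicator μ t

/-- The set of immediate successors of `t` (elements covering `t`). -/
def succSet {α : Type*} [PartialOrder α] (t : α) : Set α := {s | t ⋖ s}

lemma msetT_mono {α : Type*} {μ : α → ℝ} (hnn : ∀ t, 0 ≤ μ t) (hs : Summable μ)
    {A B : Set α} (h : A ⊆ B) : msetT μ A ≤ msetT μ B :=
  Summable.tsum_le_tsum (fun t => Set.indicator_le_indicator_of_subset h hnn t)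
    (hs.indicator A) (hs.indicator B)

lemma msetT_union_le {α : Type*} {μ : α → ℝ} (hnn : ∀ t, 0 ≤ μ t) (hs : Summable μ)
    (A B : Set α) : msetT μ (A ∪ B) ≤ msetT μ A + msetT μ B := by
  rw [msetT, msetT, msetT, ← Summable.tsum_add (hs.indicator A) (hs.indicator B)]
  refine Summable.tsum_le_tsum (fun t => ?_) (hs.indicator _) ((hs.indicator A).add (hs.indicator B))
  by_cases hA : t ∈ A
  · rw [Set.indicator_of_mem (Set.mem_union_left _ hA), Set.indicator_of_mem hA]
    have := Set.indicator_nonneg (fun x _ => hnn x) (s := B) t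
    linarith
  · by_cases hB : t ∈ B
    · rw [Set.indicator_of_mem (Set.mem_union_right _ hB), Set.indicator_of_mem hB,
        Set.indicator_of_notMem hA]
      linarith
    · rw [Set.indicator_of_notMem (fun h => h.elim hA hB), Set.indicator_of_notMem hA,
        Set.indicator_of_notMem hB]
      norm_num

lemma msetT_inter_support {α : Type*} (μ : α → ℝ) (C : Set α) :
    msetT μ (C ∩ Function.support μ) = msetT μ C := by
  unfold msetT
  congr 1; funext t
  by_cases hC : t ∈ C
  · by_cases hsp : t ∈ Function.support μ
    · rw [Set.indicator_of_mem (Set.mem_inter hC hsp), Set.indicator_of_mem hC]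
    · rw [Set.indicator_of_notMem (fun h => hsp h.2), Set.indicator_of_mem hC]
      exact (Function.notMem_support.mp hsp).symm
  · rw [Set.indicator_of_notMem (fun h => hC h.1), Set.indicator_of_notMem hC]

lemma msetT_zero_of {α : Type*} {μ : α → ℝ} {A : Set α} (h : ∀ x ∈ A, μ x = 0) :
    msetT μ A = 0 := by
  unfold msetT
  convert tsum_zero with t
  by_cases hA : t ∈ A
  · rw [Set.indicator_of_mem hA]; exact h t hA
  · rw [Set.indicator_of_notMem hA]

lemma msetT_biUnion {α β : Type*} {μ : α → ℝ} (hs : Summable μ) (H : Finset β)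
    (g : β → Set α) (hd : ∀ a ∈ H, ∀ b ∈ H, a ≠ b → Disjoint (g a) (g b)) :
    msetT μ (⋃ s ∈ H, g s) = ∑ s ∈ H, msetT μ (g s) := by
  unfold msetT
  rw [← Summable.tsum_finsetSum (fun i _ => hs.indicator (g i))]
  congr 1; funext t
  by_cases ht : t ∈ ⋃ s ∈ H, g s
  · obtain ⟨s, hsH, hts⟩ := Set.mem_iUnion₂.mp ht
    rw [Set.indicator_of_mem ht]
    rw [Finset.sum_eq_single_of_mem s hsH]
    · exact (Set.indicator_of_mem hts μ).symm
    · intro b hb hbs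
      exact Set.indicator_of_notMem
        (fun htb => Set.disjoint_left.mp (hd b hb s hsH hbs) htb hts) μ
  · rw [Set.indicator_of_notMem ht]
    refine (Finset.sum_eq_zero fun s hsH => ?_).symm
    exact Set.indicator_of_notMem (fun h => ht (Set.mem_biUnion hsH h)) μ

/-- if a bounded, disjointly supported sequence `(μs i)` of positive measures
on a countable well-founded tree has successor-determined limit `ν`, then there are an
infinite set `L ⊆ ℕ` and partitions `supp (μs i) = A i ∪ B i`, `i ∈ L`, such that, writing
`μ¹ i (C) = μs i (C ∩ A i)` and `μ² i (C) = μs i (C ∩ B i)`: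
(i) along `L`, `μ¹ i (V t) → ν (V t)` and `μ¹ i (succ t) → ν t` for every `t`; and
(ii) for every `t`, `μ² i (succ t) = 0` for all but finitely many `i ∈ L`. -/
theorem statement7 {α : Type*} [PartialOrder α] [Countable α]
    (hfin : ∀ t : α, {s | s < t}.Finite)
    (hchain : ∀ t : α, ∀ a, a < t → ∀ b, b < t → a ≤ b ∨ b ≤ a)
    (hwf : ¬ ∃ c : ℕ → α, StrictMono c)
    (μs : ℕ → α → ℝ)
    (hnn : ∀ i t, 0 ≤ μs i t)
    (hsum : ∀ i, Summable (μs i))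
    (hbdd : ∃ C : ℝ, ∀ i, msetT (μs i) Set.univ ≤ C)
    (hdisj : ∀ i j, i ≠ j →
      Disjoint (Function.support (μs i)) (Function.support (μs j)))
    (ν : α → ℝ) (hνnn : ∀ t, 0 ≤ ν t) (hνsum : Summable ν)
    (hν : ∀ t : α, Tendsto (fun i => msetT (μs i) (succSet t)) atTop (𝓝 (ν t))) :
    ∃ L : Set ℕ, L.Infinite ∧ ∃ A B : ℕ → Set α,
      (∀ i ∈ L, A i ∪ B i = Function.support (μs i) ∧ Disjoint (A i) (B i)) ∧
      (∀ t : α,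
        Tendsto (fun i => msetT (μs i) (Set.Ici t ∩ A i)) (atTop ⊓ 𝓟 L)
          (𝓝 (msetT ν (Set.Ici t))) ∧
        Tendsto (fun i => msetT (μs i) (succSet t ∩ A i)) (atTop ⊓ 𝓟 L)
          (𝓝 (ν t))) ∧
      (∀ t : α, ∀ᶠ i in atTop ⊓ 𝓟 L, msetT (μs i) (succSet t ∩ B i) = 0) := by
  classical
  by_cases hne : Nonempty α
  case neg =>
    refine ⟨Set.univ, Set.infinite_univ, fun _ => ∅, fun _ => ∅, ?_, ?_, ?_⟩
    · intro i _
      refine ⟨?_, disjoint_bot_left⟩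
      rw [Set.empty_union]
      ext x
      exact (hne ⟨x⟩).elim
    · intro t; exact (hne ⟨t⟩).elim
    · intro t; exact (hne ⟨t⟩).elim
  -- main case
  obtain ⟨e, he⟩ := exists_surjective_nat α
  set G : ℕ → Finset α := fun k => (Finset.range k).image e with hGdef
  have hGmono : Monotone G := fun a b hab =>
    Finset.image_subset_image (Finset.range_subset_range.mpr hab)
  have hGmem : ∀ x : α, ∃ k, ∀ k' ≥ k, x ∈ G k' := by
    intro x
    obtain ⟨m, rfl⟩ := he x
    exact ⟨m + 1, fun k' hk' => Finset.mem_image.mpr ⟨m, Finset.mem_range.mpr hk', rfl⟩⟩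
  set D : ℕ → Set α := fun k => ↑(G k) ∪ ⋃ s ∈ G k, succSet s with hDdef
  set δ : ℕ → ℝ := fun k => 1 / (((k : ℝ) + 1) ^ 2) with hδdef
  have hδpos : ∀ k, 0 < δ k := fun k => by positivity
  -- per-point eventualities
  have hzero : ∀ s : α, ∀ᶠ i in atTop, μs i s = 0 := by
    intro s
    by_cases hex : ∃ i0, μs i0 s ≠ 0
    · obtain ⟨i0, hi0⟩ := hex
      refine eventually_atTop.mpr ⟨i0 + 1, fun i hi => ?_⟩
      by_contra hns
      exact Set.disjoint_left.mp (hdisj i i0 (by omega)) hns hi0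
    · push_neg at hex
      exact Eventually.of_forall hex
  have hclose : ∀ (s : α) (k : ℕ), ∀ᶠ i in atTop,
      |msetT (μs i) (succSet s) - ν s| ≤ δ k := by
    intro s k
    have := Metric.tendsto_atTop.mp (hν s) (δ k) (hδpos k)
    obtain ⟨N, hN⟩ := this
    refine eventually_atTop.mpr ⟨N, fun i hi => ?_⟩
    have := hN i hi
    rw [Real.dist_eq] at this
    exact this.le
  have hP : ∀ k, ∀ᶠ i in atTop, (∀ s ∈ G k, μs i s = 0) ∧
      (∀ s ∈ G k, |msetT (μs i) (succSet s) - ν s| ≤ δ k) := by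
    intro k
    refine Eventually.and ?_ ?_
    · exact (Filter.eventually_all_finset (G k)).mpr fun s _ => hzero s
    · exact (Filter.eventually_all_finset (G k)).mpr fun s _ => hclose s k
  obtain ⟨f, hfmono, hf⟩ := Filter.extraction_forall_of_eventually hP
  -- index inverse
  have hexk : ∀ i : ℕ, ∃ k, i ≤ f k := fun i => ⟨i, hfmono.le_apply⟩
  set kof : ℕ → ℕ := fun i => Nat.find (hexk i) with hkofdef
  have hkof : ∀ k, kof (f k) = k := by
    intro k
    rw [hkofdef]
    rw [Nat.find_eq_iff]
    exact ⟨le_refl _, fun m hm hle => absurd (hfmono.le_iff_le.mp hle) (by omega)⟩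
  set A : ℕ → Set α := fun i => Function.support (μs i) ∩ D (kof i) with hAdef
  set B : ℕ → Set α := fun i => Function.support (μs i) \ D (kof i) with hBdef
  -- filter comparison
  have hle : atTop ⊓ 𝓟 (Set.range f) ≤ map f atTop := by
    intro s hs
    rw [mem_map, mem_atTop_sets] at hs
    obtain ⟨n, hn⟩ := hs
    refine mem_of_superset (inter_mem_inf (Ici_mem_atTop (f n)) (mem_principal_self _)) ?_
    rintro i ⟨hi, k, rfl⟩
    exact hn k (hfmono.le_iff_le.mp hi)
  -- order facts
  have hsuccdisj : ∀ a b : α, a ≠ b → Disjoint (succSet a) (succSet b) := by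
    intro a b hab
    rw [Set.disjoint_left]
    intro u hua hub
    rcases hchain u a hua.lt b hub.lt with h | h
    · exact hua.2 (lt_of_le_of_ne h hab) hub.lt
    · exact hub.2 (lt_of_le_of_ne h (Ne.symm hab)) hua.lt
  have hsuccIci : ∀ s t : α, ¬ t ≤ s → ∀ u ∈ succSet s ∩ Set.Ici t, u = t := by
    intro s t hts u hu
    obtain ⟨hus, hut⟩ := hu
    by_contra hne'
    have htu : t < u := lt_of_le_of_ne hut (Ne.symm hne')
    rcases hchain u s hus.lt t htu with h | h
    · exact hus.2 (lt_of_le_of_ne h (fun e => hts (e ▸ le_refl _))) htu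
    · exact hts h
  have hsuccD : ∀ k, ∀ s ∈ G k, succSet s ⊆ D k := by
    intro k s hs u hu
    exact Set.mem_union_right _ (Set.mem_biUnion hs hu)
  refine ⟨Set.range f, Set.infinite_range_of_injective hfmono.injective, A, B, ?_, ?_, ?_⟩
  · rintro i ⟨k, rfl⟩
    refine ⟨Set.inter_union_diff _ _, ?_⟩
    rw [Set.disjoint_left]
    rintro x ⟨_, hxD⟩ ⟨_, hxnD⟩
    exact hxnD hxD
  · intro t
    obtain ⟨kt, hkt⟩ := hGmem t
    constructor
    · -- main limit
      refine Tendsto.mono_left ?_ hle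
      rw [Filter.tendsto_map'_iff]
      have htarget : Tendsto (fun k => ∑ s ∈ G k, (Set.Ici t).indicator ν s) atTop
          (𝓝 (msetT ν (Set.Ici t))) := by
        have h1 : HasSum ((Set.Ici t).indicator ν) (msetT ν (Set.Ici t)) :=
          (hνsum.indicator _).hasSum
        exact h1.comp (tendsto_atTop_finset_of_monotone hGmono
          (fun x => (hGmem x).imp fun k hk => hk k le_rfl))
      have hkey : ∀ k ≥ kt, msetT (μs (f k)) (Set.Ici t ∩ A (f k))
          = ∑ s ∈ (G k).filter (fun s => s ∈ Set.Ici t), msetT (μs (f k)) (succSet s) := by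
        intro k hk
        have htG : t ∈ G k := hkt k hk
        have hA : A (f k) = Function.support (μs (f k)) ∩ D k := by
          rw [hAdef]; simp only [hkof]
        have hsub1 : (⋃ s ∈ (G k).filter (fun s => s ∈ Set.Ici t), succSet s)
            ⊆ Set.Ici t ∩ D k := by
          intro u hu
          obtain ⟨s, hs, hus⟩ := Set.mem_iUnion₂.mp hu
          obtain ⟨hsG, hts⟩ := Finset.mem_filter.mp hs
          exact ⟨le_trans hts hus.lt.le, hsuccD k s hsG hus⟩
        have hsub2 : Set.Ici t ∩ D k
            ⊆ (⋃ s ∈ (G k).filter (fun s => s ∈ Set.Ici t), succSet s) ∪ ↑(G k) := by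
          rintro u ⟨hut, huD⟩
          rcases huD with h | h
          · exact Or.inr h
          · obtain ⟨s, hsG, hus⟩ := Set.mem_iUnion₂.mp h
            by_cases hts : t ≤ s
            · exact Or.inl (Set.mem_biUnion (Finset.mem_filter.mpr ⟨hsG, hts⟩) hus)
            · have hut' : u = t := hsuccIci s t hts u ⟨hus, hut⟩
              exact Or.inr (by rw [hut']; exact htG)
        have hGzero : msetT (μs (f k)) ↑(G k) = 0 :=
          msetT_zero_of (fun x hx => (hf k).1 x hx)
        have hle1 : msetT (μs (f k)) (⋃ s ∈ (G k).filter (fun s => s ∈ Set.Ici t), succSet s)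
            ≤ msetT (μs (f k)) (Set.Ici t ∩ D k) :=
          msetT_mono (hnn (f k)) (hsum (f k)) hsub1
        have hle2 : msetT (μs (f k)) (Set.Ici t ∩ D k)
            ≤ msetT (μs (f k)) (⋃ s ∈ (G k).filter (fun s => s ∈ Set.Ici t), succSet s)
              + msetT (μs (f k)) ↑(G k) :=
          le_trans (msetT_mono (hnn (f k)) (hsum (f k)) hsub2)
            (msetT_union_le (hnn (f k)) (hsum (f k)) _ _)
        have hEeq : msetT (μs (f k)) (⋃ s ∈ (G k).filter (fun s => s ∈ Set.Ici t), succSet s)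
            = ∑ s ∈ (G k).filter (fun s => s ∈ Set.Ici t), msetT (μs (f k)) (succSet s) :=
          msetT_biUnion (hsum (f k)) _ _ (fun a _ b _ hab => hsuccdisj a b hab)
        have hset : Set.Ici t ∩ A (f k) = (Set.Ici t ∩ D k) ∩ Function.support (μs (f k)) := by
          rw [hA]; ext x
          simp only [Set.mem_inter_iff]
          tauto
        rw [hset, msetT_inter_support, ← hEeq]
        rw [hGzero] at hle2
        linarith
      have hbound : ∀ᶠ k in atTop,
          ‖msetT (μs (f k)) (Set.Ici t ∩ A (f k)) - ∑ s ∈ G k, (Set.Ici t).indicator ν s‖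
            ≤ 1 / ((k : ℝ) + 1) := by
        refine eventually_atTop.mpr ⟨kt, fun k hk => ?_⟩
        rw [hkey k hk]
        have htgt' : ∑ s ∈ G k, (Set.Ici t).indicator ν s
            = ∑ s ∈ (G k).filter (fun s => s ∈ Set.Ici t), ν s := by
          rw [Finset.sum_filter]
          exact Finset.sum_congr rfl fun s _ => by
            by_cases h : s ∈ Set.Ici t
            · rw [Set.indicator_of_mem h, if_pos h]
            · rw [Set.indicator_of_notMem h, if_neg h]
        rw [htgt', ← Finset.sum_sub_distrib, Real.norm_eq_abs]
        have h1 : |∑ s ∈ (G k).filter (fun s => s ∈ Set.Ici t),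
            (msetT (μs (f k)) (succSet s) - ν s)|
            ≤ ∑ s ∈ (G k).filter (fun s => s ∈ Set.Ici t),
              |msetT (μs (f k)) (succSet s) - ν s| := Finset.abs_sum_le_sum_abs _ _
        have h2 : ∑ s ∈ (G k).filter (fun s => s ∈ Set.Ici t),
              |msetT (μs (f k)) (succSet s) - ν s|
            ≤ ∑ _s ∈ (G k).filter (fun s => s ∈ Set.Ici t), δ k :=
          Finset.sum_le_sum (fun s hs => (hf k).2 s (Finset.mem_filter.mp hs).1)
        have hcard : (((G k).filter (fun s => s ∈ Set.Ici t)).card : ℝ) ≤ (k : ℝ) := by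
          have : ((G k).filter (fun s => s ∈ Set.Ici t)).card ≤ k := by
            refine le_trans (Finset.card_filter_le _ _) ?_
            refine le_trans Finset.card_image_le ?_
            simp
          exact_mod_cast this
        have h3 : ∑ _s ∈ (G k).filter (fun s => s ∈ Set.Ici t), δ k
            = (((G k).filter (fun s => s ∈ Set.Ici t)).card : ℝ) * δ k := by
          rw [Finset.sum_const, nsmul_eq_mul]
        have h4 : (((G k).filter (fun s => s ∈ Set.Ici t)).card : ℝ) * δ k
            ≤ (k : ℝ) * δ k := mul_le_mul_of_nonneg_right hcard (hδpos k).le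
        have h5 : (k : ℝ) * δ k ≤ 1 / ((k : ℝ) + 1) := by
          rw [hδdef]
          have hk1 : (0 : ℝ) < (k : ℝ) + 1 := by positivity
          rw [mul_one_div, div_le_div_iff₀ (by positivity) hk1]
          nlinarith [Nat.cast_nonneg (α := ℝ) k]
        linarith
      have h0 : Tendsto (fun k => msetT (μs (f k)) (Set.Ici t ∩ A (f k))
          - ∑ s ∈ G k, (Set.Ici t).indicator ν s) atTop (𝓝 0) :=
        squeeze_zero_norm' hbound tendsto_one_div_add_atTop_nhds_zero_nat
      have hsumm := htarget.add h0
      rw [add_zero] at hsumm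
      refine hsumm.congr (fun k => ?_)
      simp only [Function.comp_apply]
      ring
    · -- succ limit
      refine Tendsto.mono_left ?_ hle
      rw [Filter.tendsto_map'_iff]
      have heq : (fun k => msetT (μs (f k)) (succSet t)) =ᶠ[atTop]
          (fun k => msetT (μs (f k)) (succSet t ∩ A (f k))) := by
        refine eventually_atTop.mpr ⟨kt, fun k hk => ?_⟩
        have h1 : succSet t ∩ A (f k) = succSet t ∩ Function.support (μs (f k)) := by
          rw [hAdef]
          simp only [hkof]
          rw [Set.inter_comm (Function.support (μs (f k))) (D k), ← Set.inter_assoc]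
          congr 1
          exact Set.inter_eq_left.mpr (hsuccD k t (hkt k hk))
        show msetT (μs (f k)) (succSet t) = msetT (μs (f k)) (succSet t ∩ A (f k))
        rw [h1, msetT_inter_support]
      exact Tendsto.congr' heq ((hν t).comp hfmono.tendsto_atTop)
  · intro t
    obtain ⟨kt, hkt⟩ := hGmem t
    refine Filter.Eventually.filter_mono hle ?_
    rw [eventually_map]
    refine eventually_atTop.mpr ⟨kt, fun k hk => ?_⟩
    refine msetT_zero_of fun x hx => ?_
    obtain ⟨hx1, hx2⟩ := hx
    rw [hBdef] at hx2
    simp only [hkof] at hx2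
    exact absurd (hsuccD k t (hkt k hk) hx1) hx2.2
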